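/- Let 1/2 ≤ λ < 1, ν = 1 − λ, 0 < δ < 1, and k a nonnegative integer. Define z*(k,δ,λ) as the smallest integer z ≥ k with B_{z,k}(ν) ≤ δ. Then z*(k,δ,λ) ≤ (k + 2λ ln(1/δ) + √(2λ k ln(1/δ)))/ν + 1. -/

import Mathlib

/-- Binomial cumulative distribution function B_{z,k}(p). -/
noncomputable def binCDF (z k : ℕ) (p : ℝ) : ℝ :=
  ∑ j ∈ Finset.range (k + 1), (z.choose j : ℝ) * p ^ j * (1 - p) ^ (z - j)

/-- z*(k,δ,λ): the smallest integer z ≥ k with B_{z,k}(1-λ) ≤ δ. -/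
noncomputable def zStar (k : ℕ) (δ lam : ℝ) : ℕ :=
  sInf {z : ℕ | k ≤ z ∧ binCDF z k (1 - lam) ≤ δ}

-- Step A: 1 - e^{-t} ≤ t(l + n e^{-t}) for t ≥ 0, where l = 1-n, 0 ≤ n ≤ 1/2
lemma phi_nonneg (n : ℝ) (hn0 : 0 ≤ n) (hn : n ≤ 1/2) {t : ℝ} (ht : 0 ≤ t) :
    1 - Real.exp (-t) ≤ t * ((1 - n) + n * Real.exp (-t)) := by
  set f : ℝ → ℝ := fun x => x * ((1 - n) + n * Real.exp (-x)) - (1 - Real.exp (-x)) with hf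
  have hE : ∀ x : ℝ, HasDerivAt (fun y : ℝ => Real.exp (-y)) (-Real.exp (-x)) x := by
    intro x
    have := ((Real.hasDerivAt_exp (-x)).comp x (hasDerivAt_neg x)); simp only [mul_neg, mul_one] at this; exact this
  have hder : ∀ x : ℝ, HasDerivAt f
      (((1 - n) + n * Real.exp (-x)) + x * (n * (-Real.exp (-x))) - Real.exp (-x)) x := by
    intro x
    have h1 : HasDerivAt (fun y : ℝ => (1 - n) + n * Real.exp (-y)) (n * (-Real.exp (-x))) x := by
      exact ((hasDerivAt_const x (1 - n)).add ((hE x).const_mul n)).congr_deriv (by ring)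
    have h2 := (hasDerivAt_id x).mul h1
    have h3 : HasDerivAt (fun y : ℝ => 1 - Real.exp (-y)) (0 - (-Real.exp (-x))) x :=
      (hasDerivAt_const x 1).sub (hE x)
    have h4 := h2.sub h3
    have heq : 1 * ((1 - n) + n * Real.exp (-x)) + id x * (n * (-Real.exp (-x))) - (0 - (-Real.exp (-x)))
        = ((1 - n) + n * Real.exp (-x)) + x * (n * (-Real.exp (-x))) - Real.exp (-x) := by
      simp only [id_eq]; ring
    rw [heq] at h4
    exact h4
  have hmono : MonotoneOn f (Set.Ici (0:ℝ)) := by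
    apply monotoneOn_of_deriv_nonneg (convex_Ici 0)
    · exact fun x _ => ((hder x).continuousAt).continuousWithinAt
    · exact fun x _ => ((hder x).differentiableAt).differentiableWithinAt
    · intro x hx
      rw [interior_Ici] at hx
      rw [(hder x).deriv]
      have hE1 : Real.exp x * Real.exp (-x) = 1 := by
        rw [← Real.exp_add]; simp
      have hkey : x * Real.exp (-x) + Real.exp (-x) ≤ 1 := by
        nlinarith [mul_le_mul_of_nonneg_right (Real.add_one_le_exp x) (Real.exp_pos (-x)).le, hE1]
      have h1E : Real.exp (-x) ≤ 1 := by
        nlinarith [mul_nonneg hx.le (Real.exp_pos (-x)).le]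
      have hA : 0 ≤ n * (1 - Real.exp (-x) - x * Real.exp (-x)) :=
        mul_nonneg hn0 (by linarith)
      have hB : 0 ≤ (1 - 2*n) * (1 - Real.exp (-x)) :=
        mul_nonneg (by linarith) (by linarith)
      nlinarith [hA, hB]
  have h0 : f 0 = 0 := by simp [hf]
  have := hmono (Set.self_mem_Ici) (Set.mem_Ici.2 ht) ht
  rw [h0] at this
  simpa [hf] using this

-- Step B: Bernoulli mgf bound (Kearns–Saul style, lower tail)
lemma mgf_bound (n : ℝ) (hn0 : 0 ≤ n) (hn : n ≤ 1/2) {t : ℝ} (ht : 0 ≤ t) :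
    (1 - n) + n * Real.exp (-t) ≤ Real.exp (-(n*t) + n*(1-n)*t^2/2) := by
  have hDpos : ∀ x : ℝ, 0 < (1 - n) + n * Real.exp (-x) := by
    intro x
    nlinarith [Real.exp_pos (-x), mul_nonneg hn0 (Real.exp_pos (-x)).le]
  set H : ℝ → ℝ := fun x => -(n*x) + n*(1-n)*x^2/2 - Real.log ((1 - n) + n * Real.exp (-x))
    with hH
  have hE : ∀ x : ℝ, HasDerivAt (fun y : ℝ => Real.exp (-y)) (-Real.exp (-x)) x := by
    intro x
    have := ((Real.hasDerivAt_exp (-x)).comp x (hasDerivAt_neg x)); simp only [mul_neg, mul_one] at this; exact this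
  have hder : ∀ x : ℝ, HasDerivAt H
      (-n + n*(1-n)*x - (n * (-Real.exp (-x))) / ((1 - n) + n * Real.exp (-x))) x := by
    intro x
    have h1 : HasDerivAt (fun y : ℝ => (1 - n) + n * Real.exp (-y)) (n * (-Real.exp (-x))) x := by
      exact ((hasDerivAt_const x (1 - n)).add ((hE x).const_mul n)).congr_deriv (by ring)
    have hlog := h1.log (hDpos x).ne'
    have hpoly : HasDerivAt (fun y : ℝ => -(n*y) + n*(1-n)*y^2/2)
        (-n + n*(1-n)*x) x := by
      have ha : HasDerivAt (fun y : ℝ => -(n*y)) (-n) x := by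
        exact ((hasDerivAt_id x).const_mul n).neg.congr_deriv (by ring)
      have hb : HasDerivAt (fun y : ℝ => n*(1-n)*y^2/2) (n*(1-n)*x) x := by
        have := ((hasDerivAt_pow 2 x).const_mul (n*(1-n))).div_const 2
        simpa using this.congr_deriv (by ring)
      exact ha.add hb
    exact hpoly.sub hlog
  have hmono : MonotoneOn H (Set.Ici (0:ℝ)) := by
    apply monotoneOn_of_deriv_nonneg (convex_Ici 0)
    · exact fun x _ => ((hder x).continuousAt).continuousWithinAt
    · exact fun x _ => ((hder x).differentiableAt).differentiableWithinAt
    · intro x hx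
      rw [interior_Ici] at hx
      rw [(hder x).deriv]
      have hD := hDpos x
      have hphi := phi_nonneg n hn0 hn hx.le
      have hnum : 0 ≤ (-n + n*(1-n)*x) * ((1 - n) + n * Real.exp (-x)) + n * Real.exp (-x) := by
        nlinarith [mul_nonneg (mul_nonneg hn0 (by linarith : (0:ℝ) ≤ 1 - n))
          (sub_nonneg.2 hphi), Real.exp_pos (-x)]
      have : -n + n*(1-n)*x - (n * (-Real.exp (-x))) / ((1 - n) + n * Real.exp (-x))
          = ((-n + n*(1-n)*x) * ((1 - n) + n * Real.exp (-x)) + n * Real.exp (-x))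
            / ((1 - n) + n * Real.exp (-x)) := by
        field_simp
        ring
      rw [this]
      exact div_nonneg hnum hD.le
  have h0 : H 0 = 0 := by simp [hH]
  have hHt := hmono (Set.self_mem_Ici) (Set.mem_Ici.2 ht) ht
  rw [h0] at hHt
  have hlogle : Real.log ((1 - n) + n * Real.exp (-t)) ≤ -(n*t) + n*(1-n)*t^2/2 := by
    simp only [hH] at hHt; linarith
  calc (1 - n) + n * Real.exp (-t)
      = Real.exp (Real.log ((1 - n) + n * Real.exp (-t))) := (Real.exp_log (hDpos t)).symm
    _ ≤ Real.exp (-(n*t) + n*(1-n)*t^2/2) := Real.exp_le_exp.2 hlogle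

lemma binCDF_le_mgf (z k : ℕ) (hk : k ≤ z) (n t : ℝ) (hn0 : 0 ≤ n) (hn1 : n ≤ 1)
    (ht : 0 ≤ t) :
    binCDF z k n ≤ Real.exp (t*k) * ((1 - n) + n * Real.exp (-t))^z := by
  have hterm : ∀ j : ℕ, (0:ℝ) ≤ (z.choose j : ℝ) * n ^ j * (1 - n) ^ (z - j) := by
    intro j
    have h1n : (0:ℝ) ≤ 1 - n := by linarith
    positivity
  have h1 : binCDF z k n ≤
      ∑ j ∈ Finset.range (k + 1),
        Real.exp (t*((k:ℝ)-j)) * ((z.choose j : ℝ) * n ^ j * (1 - n) ^ (z - j)) := by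
    apply Finset.sum_le_sum
    intro j hj
    have hjk : j ≤ k := Finset.mem_range_succ_iff.mp hj
    have : (1:ℝ) ≤ Real.exp (t*((k:ℝ)-j)) := by
      apply Real.one_le_exp
      have : (j:ℝ) ≤ k := by exact_mod_cast hjk
      nlinarith
    nlinarith [hterm j]
  have h2 : ∑ j ∈ Finset.range (k + 1),
        Real.exp (t*((k:ℝ)-j)) * ((z.choose j : ℝ) * n ^ j * (1 - n) ^ (z - j)) ≤
      ∑ j ∈ Finset.range (z + 1),
        Real.exp (t*((k:ℝ)-j)) * ((z.choose j : ℝ) * n ^ j * (1 - n) ^ (z - j)) := by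
    apply Finset.sum_le_sum_of_subset_of_nonneg
    · exact Finset.range_subset_range.2 (by omega)
    · intro j _ _
      exact mul_nonneg (Real.exp_pos _).le (hterm j)
  have h3 : ∑ j ∈ Finset.range (z + 1),
        Real.exp (t*((k:ℝ)-j)) * ((z.choose j : ℝ) * n ^ j * (1 - n) ^ (z - j)) =
      Real.exp (t*k) * ((n * Real.exp (-t)) + (1 - n))^z := by
    rw [add_pow, Finset.mul_sum]
    apply Finset.sum_congr rfl
    intro j hj
    rw [show t*((k:ℝ)-j) = t*(k:ℝ) + (j:ℝ)*(-t) by ring, Real.exp_add, Real.exp_nat_mul,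
      mul_pow]
    ring
  calc binCDF z k n ≤ _ := h1
    _ ≤ _ := h2
    _ = Real.exp (t*k) * ((n * Real.exp (-t)) + (1 - n))^z := h3
    _ = Real.exp (t*k) * ((1 - n) + n * Real.exp (-t))^z := by rw [add_comm]

set_option maxHeartbeats 1000000 in
theorem stmt_7 (lam δ : ℝ) (k : ℕ) (hlam0 : 1 / 2 ≤ lam) (hlam1 : lam < 1)
    (hδ0 : 0 < δ) (hδ1 : δ < 1) :
    (zStar k δ lam : ℝ) ≤
      ((k : ℝ) + 2 * lam * Real.log (1 / δ) + Real.sqrt (2 * lam * k * Real.log (1 / δ)))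
        / (1 - lam) + 1 := by
  have hlampos : (0:ℝ) < lam := by linarith
  set n : ℝ := 1 - lam with hn
  have hn0 : 0 < n := by rw [hn]; linarith
  have hn12 : n ≤ 1/2 := by rw [hn]; linarith
  have h1n : (1:ℝ) - n = lam := by rw [hn]; ring
  set L : ℝ := Real.log (1/δ) with hLdef
  have hL : 0 < L := Real.log_pos (by rw [lt_div_iff₀ hδ0]; linarith)
  set s : ℝ := Real.sqrt (2*lam*(k:ℝ)*L) with hsdef
  have hs0 : 0 ≤ s := Real.sqrt_nonneg _
  have hs2 : s^2 = 2*lam*(k:ℝ)*L := Real.sq_sqrt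
    (by nlinarith [(Nat.cast_nonneg k : (0:ℝ) ≤ (k:ℝ)), mul_nonneg hlampos.le hL.le,
      mul_nonneg (mul_nonneg hlampos.le (Nat.cast_nonneg k : (0:ℝ) ≤ (k:ℝ))) hL.le])
  set x : ℝ := ((k:ℝ) + 2*lam*L + s)/n with hxdef
  have hxnum : 0 < (k:ℝ) + 2*lam*L + s := by
    nlinarith [(Nat.cast_nonneg k : (0:ℝ) ≤ (k:ℝ)), mul_pos hlampos hL, hs0]
  have hx0 : 0 < x := div_pos hxnum hn0
  set z : ℕ := ⌈x⌉₊ with hzdef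
  have hxz : x ≤ (z:ℝ) := Nat.le_ceil x
  have hkx : (k:ℝ) ≤ x := by
    rw [hxdef, le_div_iff₀ hn0]
    nlinarith [(Nat.cast_nonneg k : (0:ℝ) ≤ (k:ℝ)), mul_pos hlampos hL, hs0,
      mul_le_mul_of_nonneg_left (show n ≤ 1 by linarith) (Nat.cast_nonneg k : (0:ℝ) ≤ (k:ℝ))]
  have hkz : k ≤ z := by exact_mod_cast hkx.trans hxz
  obtain ⟨μ, hμdef⟩ : ∃ μ : ℝ, μ = (z:ℝ)*n := ⟨_, rfl⟩
  have hμk : (k:ℝ) + (2*lam*L + s) ≤ μ := by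
    have h := mul_le_mul_of_nonneg_right hxz hn0.le
    rw [hxdef, div_mul_cancel₀ _ hn0.ne'] at h
    rw [hμdef]; linarith
  have hμpos : 0 < μ := by
    nlinarith [(Nat.cast_nonneg k : (0:ℝ) ≤ (k:ℝ)), mul_pos hlampos hL, hs0]
  have hML : 0 < μ * lam := mul_pos hμpos hlampos
  obtain ⟨t, htdef⟩ : ∃ t : ℝ, t = (μ - (k:ℝ))/(μ*lam) := ⟨_, rfl⟩
  have ht : 0 ≤ t := htdef ▸ div_nonneg (by nlinarith [mul_pos hlampos hL, hs0]) hML.le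
  -- the binomial CDF bound
  have hmain : binCDF z k n ≤ δ := by
    have hb1 := binCDF_le_mgf z k hkz n t hn0.le (by linarith) ht
    have hb2 := mgf_bound n hn0.le hn12 ht
    have hbase : (0:ℝ) ≤ (1 - n) + n * Real.exp (-t) := by
      nlinarith [Real.exp_pos (-t), mul_nonneg hn0.le (Real.exp_pos (-t)).le]
    have hb3 : ((1 - n) + n * Real.exp (-t))^z ≤
        Real.exp (-(n*t) + n*(1-n)*t^2/2)^z := pow_le_pow_left₀ hbase hb2 z
    rw [← Real.exp_nat_mul] at hb3
    have hchain : binCDF z k n ≤ Real.exp (t*(k:ℝ) + (z:ℝ)*(-(n*t) + n*(1-n)*t^2/2)) := by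
      rw [Real.exp_add]
      exact le_trans hb1 (mul_le_mul_of_nonneg_left hb3 (Real.exp_pos _).le)
    have hstep : t*(k:ℝ) + (z:ℝ)*(-(n*t) + n*(1-n)*t^2/2)
        = t*(k:ℝ) - μ*t + μ*lam*t^2/2 := by
      rw [h1n, hμdef]; ring
    have heq2 : t*(k:ℝ) - μ*t + μ*lam*t^2/2 = -((μ-(k:ℝ))^2/(2*(μ*lam))) := by
      rw [htdef]
      field_simp
      ring
    have hquad : L * (2*(μ*lam)) ≤ (μ-(k:ℝ))^2 := by
      have hu : (0:ℝ) ≤ μ - (k:ℝ) - 2*lam*L - s := by linarith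
      have hid : (μ-(k:ℝ))^2 - L * (2*(μ*lam))
          = (μ-(k:ℝ)-2*lam*L-s)^2 + 2*s*(μ-(k:ℝ)-2*lam*L-s)
            + 2*lam*L*(μ-(k:ℝ)-2*lam*L-s) + 2*(lam*L*s) + (s^2 - 2*lam*(k:ℝ)*L) := by
        ring
      nlinarith [hid, sq_nonneg (μ-(k:ℝ)-2*lam*L-s), mul_nonneg hs0 hu,
        mul_nonneg (mul_nonneg hlampos.le hL.le) hu,
        mul_nonneg (mul_nonneg hlampos.le hL.le) hs0, hs2]
    have hexp : t*(k:ℝ) + (z:ℝ)*(-(n*t) + n*(1-n)*t^2/2) ≤ -L := by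
      rw [hstep, heq2]
      have : L ≤ (μ-(k:ℝ))^2/(2*(μ*lam)) := (le_div_iff₀ (by linarith [hML])).2 hquad
      linarith
    have hδeq : Real.exp (-L) = δ := by
      rw [hLdef, one_div, Real.log_inv, neg_neg, Real.exp_log hδ0]
    calc binCDF z k n ≤ _ := hchain
      _ ≤ Real.exp (-L) := Real.exp_le_exp.2 hexp
      _ = δ := hδeq
  have hmem : z ∈ {z : ℕ | k ≤ z ∧ binCDF z k (1 - lam) ≤ δ} := by
    refine ⟨hkz, ?_⟩
    rw [← hn]
    exact hmain
  have h1 : zStar k δ lam ≤ z := Nat.sInf_le hmem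
  have h2 : (z:ℝ) < x + 1 := Nat.ceil_lt_add_one hx0.le
  have h3 : (zStar k δ lam : ℝ) ≤ (z:ℝ) := by exact_mod_cast h1
  linarith
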